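/- Let γₙ > 0 be an increasing sequence converging to 1, X = { (xₙ) ∈ ℓ² : Σₙ |xₙ|^{2γₙ} < ∞ } with d((xₙ),(yₙ)) = (Σₙ |xₙ − yₙ|^{2γₙ})^{1/2}. Then for every k ∈ ℕ and α > 0 there exist k equally spaced points in X violating the inequality Σ_{i=1}^{k−1} d(xᵢ, xᵢ₊₁) ≥ (1+α)·d(x₁, x_k); specifically, for n large enough, the points x_i = (i·t)·eₙ, i = 1,…,k (multiples of the n-th coordinate vector, any t > 0), satisfy d(xᵢ, xᵢ₊₁) = t^{γₙ} for all i and Σᵢ d(xᵢ, xᵢ₊₁) = (k−1)·t^{γₙ} < (1+α)·((k−1)t)^{γₙ} = (1+α)·d(x₁, x_k). -/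

import Mathlib

/-- The distance on the infinite snowflake product:
`d(x, y) = (Σₙ |xₙ − yₙ|^{2γₙ})^{1/2}`. -/
noncomputable def snowDist (γ : ℕ → ℝ) (x y : ℕ → ℝ) : ℝ :=
  Real.sqrt (∑' n, |x n - y n| ^ (2 * γ n))

/-- If two points agree outside coordinate `n`, the snowflake distance is the
`γ n`-snowflake of the one-dimensional distance. -/
lemma snow_single (γ : ℕ → ℝ) (hpos : ∀ m, 0 < γ m) (n : ℕ) (x y : ℕ → ℝ)
    (h : ∀ m, m ≠ n → x m = y m) :
    snowDist γ x y = |x n - y n| ^ γ n := by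
  unfold snowDist
  rw [tsum_eq_single n (by
    intro m hm
    rw [h m hm, sub_self, abs_zero, Real.zero_rpow (by have := hpos m; positivity)])]
  have ha : (0:ℝ) ≤ |x n - y n| := abs_nonneg _
  rw [show 2 * γ n = γ n * 2 by ring, Real.rpow_mul ha,
    show ((2:ℝ) = ((2:ℕ):ℝ)) by norm_num, Real.rpow_natCast,
    Real.sqrt_sq (Real.rpow_nonneg ha _)]

/-- Infinite products of snowflakes fail every SRA-type condition: if `γₙ ∈ (0,1)` is an
increasing sequence converging to `1`, then for every `k ≥ 2`, `α > 0` and `t > 0` there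
is `N` such that for all `n ≥ N` the `k` equally spaced points `x i = (i·t)·eₙ`
(`i = 1, …, k`) along the `n`-th coordinate direction satisfy `d(xᵢ, xᵢ₊₁) = t^{γₙ}`,
`Σ_{i=1}^{k−1} d(xᵢ, xᵢ₊₁) = (k−1)·t^{γₙ} < (1+α)·((k−1)·t)^{γₙ} = (1+α)·d(x₁, x_k)`,
violating the SRA lower bound `Σ d(xᵢ, xᵢ₊₁) ≥ (1+α)·d(x₁, x_k)`. -/
theorem infinite_snowflake_product_not_SRA (γ : ℕ → ℝ)
    (hpos : ∀ n, 0 < γ n) (hlt : ∀ n, γ n < 1) (hmono : StrictMono γ)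
    (hlim : Filter.Tendsto γ Filter.atTop (nhds 1))
    (k : ℕ) (hk : 2 ≤ k) (α : ℝ) (hα : 0 < α) (t : ℝ) (ht : 0 < t) :
    ∃ N : ℕ, ∀ n ≥ N, ∀ x : ℕ → ℕ → ℝ,
      (∀ i, x i = fun m => if m = n then (i : ℝ) * t else 0) →
      (∀ i, snowDist γ (x i) (x (i + 1)) = t ^ γ n) ∧
      (∑ i ∈ Finset.range (k - 1), snowDist γ (x (i + 1)) (x (i + 2))
        = ((k : ℝ) - 1) * t ^ γ n) ∧
      snowDist γ (x 1) (x k) = (((k : ℝ) - 1) * t) ^ γ n ∧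
      ((k : ℝ) - 1) * t ^ γ n < (1 + α) * (((k : ℝ) - 1) * t) ^ γ n := by
  set c : ℝ := (k : ℝ) - 1 with hc
  have hc1 : (1:ℝ) ≤ c := by
    have : (2:ℝ) ≤ (k:ℝ) := by exact_mod_cast hk
    simp [hc]; linarith
  have hcpos : 0 < c := lt_of_lt_of_le one_pos hc1
  -- c ^ (1 - γ n) → c ^ 0 = 1
  have htend : Filter.Tendsto (fun n => c ^ (1 - γ n)) Filter.atTop (nhds 1) := by
    have h1 : Filter.Tendsto (fun n => 1 - γ n) Filter.atTop (nhds 0) := by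
      have := hlim.const_sub 1
      simpa using this
    have h2 : Filter.Tendsto (fun n => c ^ (1 - γ n)) Filter.atTop (nhds (c ^ (0:ℝ))) :=
      (Real.continuousAt_const_rpow (ne_of_gt hcpos)).tendsto.comp h1
    simpa using h2
  have hev : ∀ᶠ n in Filter.atTop, c ^ (1 - γ n) < 1 + α :=
    htend.eventually_lt_const (by linarith)
  obtain ⟨N, hN⟩ := Filter.eventually_atTop.1 hev
  refine ⟨N, fun n hn x hx => ?_⟩
  have hd : ∀ i j : ℕ, snowDist γ (x i) (x j) = (|(i : ℝ) - j| * t) ^ γ n := by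
    intro i j
    rw [snow_single γ hpos n _ _ (by intro m hm; simp [hx i, hx j, hm])]
    congr 1
    simp [hx i, hx j]
    rw [← sub_mul, abs_mul, abs_of_pos ht]
  have hstep : ∀ i : ℕ, snowDist γ (x i) (x (i + 1)) = t ^ γ n := by
    intro i
    rw [hd i (i+1)]
    congr 1
    push_cast
    rw [show (i:ℝ) - (i+1) = -1 by ring]
    simp
  have hlong : snowDist γ (x 1) (x k) = (c * t) ^ γ n := by
    rw [hd 1 k]
    congr 2
    have hk2 : (2:ℝ) ≤ (k:ℝ) := by exact_mod_cast hk
    rw [abs_of_nonpos (by push_cast; linarith)]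
    simp [hc]
  refine ⟨hstep, ?_, hlong, ?_⟩
  · rw [Finset.sum_congr rfl (fun i _ => hstep (i+1)), Finset.sum_const,
      Finset.card_range, nsmul_eq_mul]
    congr 1
    have : (1:ℕ) ≤ k := by omega
    push_cast [Nat.cast_sub this]
    ring
  · have hkey : c < (1 + α) * c ^ γ n := by
      have h1 : c = c ^ (1 - γ n) * c ^ γ n := by
        rw [← Real.rpow_add hcpos]; simp
      have h2 : 0 < c ^ γ n := Real.rpow_pos_of_pos hcpos _
      calc c = c ^ (1 - γ n) * c ^ γ n := h1
        _ < (1 + α) * c ^ γ n := by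
            exact mul_lt_mul_of_pos_right (hN n hn) h2
    have h3 : (c * t) ^ γ n = c ^ γ n * t ^ γ n :=
      Real.mul_rpow (le_of_lt hcpos) (le_of_lt ht)
    have h4 : 0 < t ^ γ n := Real.rpow_pos_of_pos ht _
    rw [h3, ← mul_assoc]
    exact mul_lt_mul_of_pos_right hkey h4
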